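/- For integers 0 ≤ θ_1 < θ_2, the function G_P(λ) = ∑_{i=θ_1+1}^{θ_2} e^{-λ} λ^i/i! attains its maximum over λ ∈ (0,∞) uniquely at λ* = (θ_2!/θ_1!)^{1/(θ_2-θ_1)}; it is strictly increasing on (0, λ*] and strictly decreasing on [λ*, ∞). -/

import Mathlib

open Finset

private lemma termDeriv (n : ℕ) (x : ℝ) :
    HasDerivAt (fun y : ℝ => Real.exp (-y) * y ^ (n + 1) / (Nat.factorial (n + 1)))
      (Real.exp (-x) * (x ^ n / (Nat.factorial n) - x ^ (n + 1) / (Nat.factorial (n + 1)))) x := by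
  have h1 : HasDerivAt (fun y : ℝ => Real.exp (-y)) (Real.exp (-x) * (-1)) x :=
    ((hasDerivAt_id x).neg.exp)
  have h2 := (h1.mul (hasDerivAt_pow (n + 1) x)).div_const ((Nat.factorial (n + 1) : ℝ))
  refine h2.congr_deriv ?_
  have hf : (Nat.factorial (n + 1) : ℝ) = (n + 1) * Nat.factorial n := by
    push_cast [Nat.factorial_succ]; ring
  have hn : (Nat.factorial n : ℝ) ≠ 0 := Nat.cast_ne_zero.2 (Nat.factorial_ne_zero n)
  have hn1 : (Nat.factorial (n + 1) : ℝ) ≠ 0 := Nat.cast_ne_zero.2 (Nat.factorial_ne_zero _)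
  rw [hf, Nat.add_sub_cancel]
  push_cast
  field_simp
  ring

private lemma sumDeriv (a b : ℕ) (hab : a < b) (x : ℝ) :
    HasDerivAt (fun y : ℝ => ∑ i ∈ Finset.Icc (a + 1) b, Real.exp (-y) * y ^ i / (Nat.factorial i))
      (Real.exp (-x) * (x ^ a / (Nat.factorial a) - x ^ b / (Nat.factorial b))) x := by
  induction b, hab using Nat.le_induction with
  | base =>
      simp only [Finset.Icc_self, Finset.sum_singleton]
      exact termDeriv a x
  | succ b hb ih =>
      have hstep : ∀ y : ℝ, ∑ i ∈ Finset.Icc (a + 1) (b + 1), Real.exp (-y) * y ^ i / (Nat.factorial i)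
          = (∑ i ∈ Finset.Icc (a + 1) b, Real.exp (-y) * y ^ i / (Nat.factorial i))
            + Real.exp (-y) * y ^ (b + 1) / (Nat.factorial (b + 1)) := by
        intro y
        rw [Finset.sum_Icc_succ_top (by omega)]
      simp only [hstep]
      have := ih.add (termDeriv b x)
      refine this.congr_deriv ?_
      ring

theorem stmt4 (θ1 θ2 : ℕ) (h : θ1 < θ2) :
    let G : ℝ → ℝ :=
      fun x => ∑ i ∈ Finset.Icc (θ1 + 1) θ2, Real.exp (-x) * x ^ i / (Nat.factorial i)
    let lamStar : ℝ := ((Nat.factorial θ2 : ℝ) / (Nat.factorial θ1)) ^ (((θ2 : ℝ) - θ1)⁻¹)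
    StrictMonoOn G (Set.Ioc 0 lamStar) ∧ StrictAntiOn G (Set.Ici lamStar) ∧
      ∀ x ∈ Set.Ioi (0 : ℝ), x ≠ lamStar → G x < G lamStar := by
  intro G lamStar
  set d : ℕ := θ2 - θ1 with hdd
  have hd : 0 < d := Nat.sub_pos_of_lt h
  have hratio : (0:ℝ) < (Nat.factorial θ2 : ℝ) / (Nat.factorial θ1) := by positivity
  have hlam_pos : 0 < lamStar := Real.rpow_pos_of_pos hratio _
  have hcast : ((θ2 : ℝ) - θ1) = (d : ℝ) := by
    rw [hdd, Nat.cast_sub h.le]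
  have hdne : ((d : ℝ)) ≠ 0 := Nat.cast_ne_zero.2 hd.ne'
  have hlam_pow : lamStar ^ d = (Nat.factorial θ2 : ℝ) / (Nat.factorial θ1) := by
    show (((Nat.factorial θ2 : ℝ) / (Nat.factorial θ1)) ^ (((θ2 : ℝ) - θ1)⁻¹)) ^ d = _
    rw [← Real.rpow_natCast (((Nat.factorial θ2 : ℝ) / (Nat.factorial θ1)) ^ (((θ2 : ℝ) - θ1)⁻¹)) d,
      ← Real.rpow_mul hratio.le, hcast, inv_mul_cancel₀ hdne, Real.rpow_one]
  set g : ℝ → ℝ := fun x =>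
    Real.exp (-x) * (x ^ θ1 / (Nat.factorial θ1) - x ^ θ2 / (Nat.factorial θ2)) with hg
  have hG : ∀ x : ℝ, HasDerivAt G (g x) x := fun x => sumDeriv θ1 θ2 h x
  have hGderiv : ∀ x : ℝ, deriv G x = g x := fun x => (hG x).deriv
  have hGcont : Continuous G := by
    apply continuous_finset_sum
    intro i _
    fun_prop
  have hpowsplit : ∀ x : ℝ, x ^ θ2 = x ^ θ1 * x ^ d := by
    intro x; rw [← pow_add, Nat.add_sub_cancel' h.le]
  have hf1 : (0:ℝ) < (Nat.factorial θ1 : ℝ) := by positivity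
  have hf2 : (0:ℝ) < (Nat.factorial θ2 : ℝ) := by positivity
  have hkey : lamStar ^ d * (Nat.factorial θ1 : ℝ) = (Nat.factorial θ2 : ℝ) := by
    rw [hlam_pow]; field_simp
  -- sign of g
  have hpos : ∀ x : ℝ, 0 < x → x < lamStar → 0 < g x := by
    intro x hx hxl
    have hxd : x ^ d < lamStar ^ d := pow_lt_pow_left₀ hxl hx.le hd.ne'
    have hxp : (0:ℝ) < x ^ θ1 := pow_pos hx _
    have : x ^ θ2 / (Nat.factorial θ2 : ℝ) < x ^ θ1 / (Nat.factorial θ1 : ℝ) := by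
      rw [hpowsplit x, div_lt_div_iff₀ hf2 hf1]
      have h3 : x ^ d * (Nat.factorial θ1 : ℝ) < (Nat.factorial θ2 : ℝ) := by
        rw [← hkey]; exact mul_lt_mul_of_pos_right hxd hf1
      calc x ^ θ1 * x ^ d * (Nat.factorial θ1 : ℝ) = x ^ θ1 * (x ^ d * (Nat.factorial θ1 : ℝ)) := by ring
        _ < x ^ θ1 * (Nat.factorial θ2 : ℝ) := mul_lt_mul_of_pos_left h3 hxp
    have := sub_pos.2 this
    exact mul_pos (Real.exp_pos _) this
  have hneg : ∀ x : ℝ, lamStar < x → g x < 0 := by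
    intro x hxl
    have hx : 0 < x := hlam_pos.trans hxl
    have hxd : lamStar ^ d < x ^ d := pow_lt_pow_left₀ hxl hlam_pos.le hd.ne'
    have hxp : (0:ℝ) < x ^ θ1 := pow_pos hx _
    have : x ^ θ1 / (Nat.factorial θ1 : ℝ) < x ^ θ2 / (Nat.factorial θ2 : ℝ) := by
      rw [hpowsplit x, div_lt_div_iff₀ hf1 hf2]
      have h3 : (Nat.factorial θ2 : ℝ) < x ^ d * (Nat.factorial θ1 : ℝ) := by
        rw [← hkey]; exact mul_lt_mul_of_pos_right hxd hf1
      calc x ^ θ1 * (Nat.factorial θ2 : ℝ) < x ^ θ1 * (x ^ d * (Nat.factorial θ1 : ℝ)) := mul_lt_mul_of_pos_left h3 hxp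
        _ = x ^ θ1 * x ^ d * (Nat.factorial θ1 : ℝ) := by ring
    have := sub_neg.2 this
    exact mul_neg_of_pos_of_neg (Real.exp_pos _) this
  have hmono : StrictMonoOn G (Set.Ioc 0 lamStar) := by
    apply strictMonoOn_of_deriv_pos (convex_Ioc _ _) hGcont.continuousOn
    intro x hx
    rw [interior_Ioc] at hx
    rw [hGderiv]
    exact hpos x hx.1 hx.2
  have hanti : StrictAntiOn G (Set.Ici lamStar) := by
    apply strictAntiOn_of_deriv_neg (convex_Ici _) hGcont.continuousOn
    intro x hx
    rw [interior_Ici] at hx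
    rw [hGderiv]
    exact hneg x hx
  refine ⟨hmono, hanti, ?_⟩
  intro x hx hne
  rcases lt_or_gt_of_ne hne with hlt | hgt
  · exact hmono ⟨hx, hlt.le⟩ ⟨hlam_pos, le_refl _⟩ hlt
  · exact hanti (le_refl lamStar) hgt.le hgt
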